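/- Let b ≥ 2 and α = 1, and let μ̂ = (1/n)Σ_{j=0}^k Σ_{ℓ=1}^{a_j} b^j μ̂_{jℓ} where n = Σ_{j=0}^k a_j b^j in base b with a_k > 0, and Var(μ̂_{jℓ}) ≤ C·b^{−2j}. Then Var(μ̂) ≤ C(b−1)²(k+1)²/n², i.e., Var(μ̂) = O(n^{−2}(log n)²). -/

import Mathlib

set_option maxHeartbeats 1000000

open MeasureTheory ProbabilityTheory

lemma evariance_eq_eLpNorm_sq {Ω : Type*} {m : MeasurableSpace Ω} (X : Ω → ℝ) (μ : Measure Ω) :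
    evariance X μ = (eLpNorm (fun ω => X ω - μ[X]) 2 μ) ^ 2 := by
  rw [evariance, eLpNorm_eq_lintegral_rpow_enorm_toReal two_ne_zero ENNReal.ofNat_ne_top]
  rw [← ENNReal.rpow_natCast _ 2, ← ENNReal.rpow_mul]
  norm_num

lemma variance_finset_sum_le {Ω : Type*} [MeasureSpace Ω]
    [IsProbabilityMeasure (ℙ : Measure Ω)]
    {ι : Type*} (s : Finset ι) (X : ι → Ω → ℝ) (hX : ∀ i ∈ s, MemLp (X i) 2 ℙ) :
    variance (fun ω => ∑ i ∈ s, X i ω) ℙ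
      ≤ (∑ i ∈ s, Real.sqrt (variance (X i) ℙ)) ^ 2 := by
  have hint : ∀ i ∈ s, Integrable (X i) ℙ := fun i hi => (hX i hi).integrable (by norm_num)
  have hE : (ℙ : Measure Ω)[fun ω => ∑ i ∈ s, X i ω] = ∑ i ∈ s, (ℙ : Measure Ω)[X i] :=
    integral_finset_sum s hint
  have hcent : ∀ i ∈ s, MemLp (fun ω => X i ω - (ℙ : Measure Ω)[X i]) 2 ℙ :=
    fun i hi => (hX i hi).sub (memLp_const _)
  have hfin : ∀ i ∈ s, eLpNorm (fun ω => X i ω - (ℙ : Measure Ω)[X i]) 2 ℙ ≠ ⊤ :=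
    fun i hi => (hcent i hi).2.ne
  have key : eLpNorm (fun ω => (∑ i ∈ s, X i ω) - (ℙ : Measure Ω)[fun ω => ∑ i ∈ s, X i ω]) 2 ℙ
      ≤ ∑ i ∈ s, eLpNorm (fun ω => X i ω - (ℙ : Measure Ω)[X i]) 2 ℙ := by
    have : (fun ω => (∑ i ∈ s, X i ω) - (ℙ : Measure Ω)[fun ω => ∑ i ∈ s, X i ω])
        = ∑ i ∈ s, (fun ω => X i ω - (ℙ : Measure Ω)[X i]) := by
      funext ω; rw [hE, Finset.sum_apply, Finset.sum_sub_distrib]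
    rw [this]
    exact eLpNorm_sum_le (fun i hi => (hcent i hi).1) (by norm_num)
  have hvar_eq : ∀ i ∈ s, Real.sqrt (variance (X i) ℙ)
      = (eLpNorm (fun ω => X i ω - (ℙ : Measure Ω)[X i]) 2 ℙ).toReal := by
    intro i hi
    rw [variance, evariance_eq_eLpNorm_sq, ENNReal.toReal_pow,
      Real.sqrt_sq ENNReal.toReal_nonneg]
  rw [variance, evariance_eq_eLpNorm_sq, ENNReal.toReal_pow]
  have h1 : (eLpNorm (fun ω => (∑ i ∈ s, X i ω)
      - (ℙ : Measure Ω)[fun ω => ∑ i ∈ s, X i ω]) 2 ℙ).toReal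
      ≤ ∑ i ∈ s, (eLpNorm (fun ω => X i ω - (ℙ : Measure Ω)[X i]) 2 ℙ).toReal := by
    rw [← ENNReal.toReal_sum hfin]
    exact ENNReal.toReal_mono (ENNReal.sum_ne_top.2 hfin) key
  calc (eLpNorm (fun ω => (∑ i ∈ s, X i ω)
        - (ℙ : Measure Ω)[fun ω => ∑ i ∈ s, X i ω]) 2 ℙ).toReal ^ 2
      ≤ (∑ i ∈ s, (eLpNorm (fun ω => X i ω - (ℙ : Measure Ω)[X i]) 2 ℙ).toReal) ^ 2 :=
        pow_le_pow_left₀ ENNReal.toReal_nonneg h1 2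
    _ = (∑ i ∈ s, Real.sqrt (variance (X i) ℙ)) ^ 2 := by
        rw [Finset.sum_congr rfl hvar_eq]

/-- Variance-rate extension for the critical rate `α = 1`: the base-`b` digit
decomposition gives `Var(μ̂) ≤ C(b-1)²(k+1)²/n² = O(n^{-2}(log n)²)`. -/
theorem variance_rate_extension_critical (b : ℕ) (hb : 2 ≤ b) (k n : ℕ) (hn : 0 < n)
    {Ω : Type*} [MeasureSpace Ω] [IsProbabilityMeasure (ℙ : Measure Ω)]
    (a : ℕ → ℕ) (ha : ∀ j, j ≤ k → a j ≤ b - 1) (hak : 1 ≤ a k)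
    (hdigits : n = ∑ j ∈ Finset.range (k + 1), a j * b ^ j)
    (Y : ℕ → ℕ → Ω → ℝ) (hY : ∀ j ℓ, MemLp (Y j ℓ) 2 ℙ)
    (C : ℝ) (hC : 0 ≤ C)
    (hvar : ∀ j ℓ, j ≤ k → ℓ < a j →
      variance (Y j ℓ) ℙ ≤ C * ((b : ℝ) ^ (2 * j))⁻¹) :
    variance (fun ω => (1 / (n : ℝ)) * ∑ j ∈ Finset.range (k + 1),
        ∑ ℓ ∈ Finset.range (a j), (b : ℝ) ^ j * Y j ℓ ω) ℙ
      ≤ C * ((b : ℝ) - 1) ^ 2 * ((k : ℝ) + 1) ^ 2 / (n : ℝ) ^ 2 := by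
  have hb0 : (0:ℝ) < b := by positivity
  -- rewrite as sum over a sigma type
  set s : Finset ((_ : ℕ) × ℕ) := (Finset.range (k + 1)).sigma (fun j => Finset.range (a j))
    with hs
  set X : (Σ _ : ℕ, ℕ) → Ω → ℝ := fun p ω => (b : ℝ) ^ p.1 * Y p.1 p.2 ω with hX'
  have hsum_eq : (fun ω => ∑ j ∈ Finset.range (k + 1),
      ∑ ℓ ∈ Finset.range (a j), (b : ℝ) ^ j * Y j ℓ ω) = fun ω => ∑ p ∈ s, X p ω := by
    funext ω; rw [hs, Finset.sum_sigma]
  have hXmem : ∀ p ∈ s, MemLp (X p) 2 ℙ := fun p _ =>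
    ((hY p.1 p.2).const_mul _)
  -- variance of each term
  have hterm : ∀ p ∈ s, Real.sqrt (variance (X p) ℙ) ≤ Real.sqrt C := by
    intro p hp
    rw [hs, Finset.mem_sigma, Finset.mem_range, Finset.mem_range] at hp
    apply Real.sqrt_le_sqrt
    have : variance (X p) ℙ = ((b:ℝ)^p.1)^2 * variance (Y p.1 p.2) ℙ :=
      variance_const_mul _ _ _
    rw [this]
    have hb2 : ((b:ℝ)^p.1)^2 = (b:ℝ)^(2*p.1) := by rw [← pow_mul, mul_comm]
    calc ((b:ℝ)^p.1)^2 * variance (Y p.1 p.2) ℙ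
        ≤ ((b:ℝ)^p.1)^2 * (C * ((b : ℝ) ^ (2 * p.1))⁻¹) := by
          apply mul_le_mul_of_nonneg_left (hvar p.1 p.2 (Nat.lt_succ_iff.mp hp.1) hp.2)
          positivity
      _ = C := by rw [hb2]; field_simp
  have hsqrtsum : ∑ p ∈ s, Real.sqrt (variance (X p) ℙ)
      ≤ ((k:ℝ) + 1) * (((b:ℝ) - 1) * Real.sqrt C) := by
    calc ∑ p ∈ s, Real.sqrt (variance (X p) ℙ) ≤ ∑ _p ∈ s, Real.sqrt C :=
          Finset.sum_le_sum hterm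
      _ = (s.card : ℝ) * Real.sqrt C := by rw [Finset.sum_const, nsmul_eq_mul]
      _ ≤ ((k:ℝ) + 1) * (((b:ℝ) - 1) * Real.sqrt C) := by
          rw [← mul_assoc]
          apply mul_le_mul_of_nonneg_right _ (Real.sqrt_nonneg C)
          have hcard : s.card = ∑ j ∈ Finset.range (k+1), a j := by
            rw [hs, Finset.card_sigma]
            simp
          rw [hcard]
          push_cast
          calc (∑ j ∈ Finset.range (k+1), (a j : ℝ))
              ≤ ∑ _j ∈ Finset.range (k+1), ((b:ℝ) - 1) := by
                apply Finset.sum_le_sum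
                intro j hj
                have := ha j (Nat.lt_succ_iff.mp (Finset.mem_range.mp hj))
                have hcast : (a j : ℝ) ≤ ((b - 1 : ℕ) : ℝ) := Nat.cast_le.mpr this
                rwa [Nat.cast_sub (by omega), Nat.cast_one] at hcast
            _ = ((k:ℝ) + 1) * ((b:ℝ) - 1) := by
                rw [Finset.sum_const, nsmul_eq_mul, Finset.card_range]; push_cast; ring
  -- put it together
  have hmain : variance (fun ω => ∑ p ∈ s, X p ω) ℙ
      ≤ C * ((b : ℝ) - 1) ^ 2 * ((k : ℝ) + 1) ^ 2 := by
    calc variance (fun ω => ∑ p ∈ s, X p ω) ℙ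
        ≤ (∑ p ∈ s, Real.sqrt (variance (X p) ℙ)) ^ 2 :=
          variance_finset_sum_le s X hXmem
      _ ≤ (((k:ℝ) + 1) * (((b:ℝ) - 1) * Real.sqrt C)) ^ 2 := by
          apply pow_le_pow_left₀ _ hsqrtsum
          exact Finset.sum_nonneg fun p _ => Real.sqrt_nonneg _
      _ = C * ((b : ℝ) - 1) ^ 2 * ((k : ℝ) + 1) ^ 2 := by
          rw [mul_pow, mul_pow, Real.sq_sqrt hC]; ring
  have : variance (fun ω => (1 / (n : ℝ)) * ∑ j ∈ Finset.range (k + 1),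
      ∑ ℓ ∈ Finset.range (a j), (b : ℝ) ^ j * Y j ℓ ω) ℙ
      = (1 / (n:ℝ))^2 * variance (fun ω => ∑ p ∈ s, X p ω) ℙ := by
    rw [← hsum_eq]
    exact variance_const_mul _ _ _
  rw [this]
  have hn0 : (0:ℝ) < n := by exact_mod_cast hn
  calc (1 / (n:ℝ))^2 * variance (fun ω => ∑ p ∈ s, X p ω) ℙ
      ≤ (1 / (n:ℝ))^2 * (C * ((b : ℝ) - 1) ^ 2 * ((k : ℝ) + 1) ^ 2) :=
        mul_le_mul_of_nonneg_left hmain (by positivity)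
    _ = C * ((b : ℝ) - 1) ^ 2 * ((k : ℝ) + 1) ^ 2 / (n : ℝ) ^ 2 := by
        field_simp
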